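/- For every ε > 0 there exists a rapidly decreasing (Schwartz) function f: ℝ → ℝ that is band-limited in [−(1+ε)/2, (1+ε)/2], satisfies f(0) = 1, and satisfies f(n) = 0 for every nonzero integer n. -/

import Mathlib

open MeasureTheory Set

noncomputable section

/-- A function `f : ℝ → ℂ` is band-limited in `I` if its distributional Fourier transform
is supported in `I`, i.e. `⟨𝓕 f, g⟩ = ⟨f, 𝓕 g⟩ = 0` for every Schwartz function `g`
whose support is disjoint from `I`. -/
def BandLimitedIn (I : Set ℝ) (f : ℝ → ℂ) : Prop :=
  ∀ g : SchwartzMap ℝ ℂ, Disjoint (tsupport ⇑g) I →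
    ∫ t : ℝ, f t * FourierTransform.fourier (⇑g : ℝ → ℂ) t = 0

open Complex Function FourierTransform
open scoped Convolution Real

/-- A smooth compactly supported function as a Schwartz map. -/
def toSchwartzC (f : ℝ → ℂ) (h1 : ContDiff ℝ ((⊤ : ℕ∞) : WithTop ℕ∞) f)
    (h2 : HasCompactSupport f) : SchwartzMap ℝ ℂ where
  toFun := f
  smooth' := h1
  decay' := by
    intro k n
    have hD : HasCompactSupport (iteratedFDeriv ℝ n f) := h2.iteratedFDeriv n
    have hu : Continuous (fun x : ℝ => ‖x‖ ^ k * ‖iteratedFDeriv ℝ n f x‖) :=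
      (continuous_norm.pow k).mul (h1.continuous_iteratedFDeriv (by exact_mod_cast le_top)).norm
    have hsupp : HasCompactSupport (fun x : ℝ => ‖x‖ ^ k * ‖iteratedFDeriv ℝ n f x‖) :=
      HasCompactSupport.mul_left hD.norm
    obtain ⟨C, hC⟩ := hsupp.exists_bound_of_continuous hu
    exact ⟨C, fun x => (le_abs_self _).trans (hC x)⟩

@[simp] lemma toSchwartzC_apply (f : ℝ → ℂ) (h1) (h2) (x : ℝ) :
    toSchwartzC f h1 h2 x = f x := rfl

/-- **Interpolation.** For every `ε > 0` there is a real Schwartz function band-limited in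
`[-(1+ε)/2, (1+ε)/2]` with `f(0) = 1` and `f(n) = 0` for every nonzero integer `n`. -/
theorem interpolation_function (ε : ℝ) (hε : 0 < ε) :
    ∃ f : SchwartzMap ℝ ℝ,
      BandLimitedIn (Icc (-((1 + ε) / 2)) ((1 + ε) / 2)) (fun t => (f t : ℂ)) ∧
      f 0 = 1 ∧ ∀ n : ℤ, n ≠ 0 → f (n : ℝ) = 0 := by
  set φ : ContDiffBump (0:ℝ) := ⟨ε/4, ε/2, by positivity, by linarith⟩ with hφ
  set φc : ℝ → ℂ := fun x => ((φ.normed volume x : ℝ) : ℂ) with hφc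
  set χ : ℝ → ℂ := indicator (Icc (-(1/2) : ℝ) (1/2)) (fun _ => 1) with hχ
  have hφc_smooth : ContDiff ℝ ((⊤ : ℕ∞) : WithTop ℕ∞) φc :=
    Complex.ofRealCLM.contDiff.comp φ.contDiff_normed
  have hφc_supp : HasCompactSupport φc :=
    (φ.hasCompactSupport_normed).comp_left (g := fun r : ℝ => (r : ℂ)) Complex.ofReal_zero
  have hφc_int : Integrable φc := (φ.integrable_normed).ofReal
  have hχ_int : Integrable χ := by
    refine (IntegrableOn.integrable_indicator ?_ measurableSet_Icc)
    exact integrableOn_const measure_Icc_lt_top.ne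
  have hχ_supp : HasCompactSupport χ := by
    apply HasCompactSupport.intro (isCompact_Icc (a := -(1/2:ℝ)) (b := 1/2))
    intro x hx
    exact indicator_of_notMem hx _
  set g : ℝ → ℂ := φc ⋆[ContinuousLinearMap.mul ℝ ℂ] χ with hg
  have hg_smooth : ContDiff ℝ ((⊤ : ℕ∞) : WithTop ℕ∞) g :=
    hφc_supp.contDiff_convolution_left _ hφc_smooth hχ_int.locallyIntegrable
  have hg_supp : HasCompactSupport g := hφc_supp.convolution _ hχ_supp
  -- support bound
  have hg_tsupp : tsupport g ⊆ Icc (-((1 + ε) / 2)) ((1 + ε) / 2) := by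
    refine closure_minimal ?_ isClosed_Icc
    intro x hx
    obtain ⟨y, hy, z, hz, rfl⟩ := support_convolution_subset _ hx
    have hy' : y ∈ Metric.ball (0:ℝ) (ε/2) := by
      have : φ.normed volume y ≠ 0 := by
        intro h0; apply hy; simp [hφc, h0]
      have := φ.support_normed_eq (μ := volume) ▸ Function.mem_support.2 this
      exact this
    have hz' : z ∈ Icc (-(1/2):ℝ) (1/2) := by
      by_contra hzc
      exact hz (indicator_of_notMem hzc _)
    simp only [Metric.mem_ball, Real.dist_eq, sub_zero] at hy'
    rw [mem_Icc]
    rcases abs_lt.1 hy' with ⟨h1, h2⟩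
    rcases hz' with ⟨h3, h4⟩
    constructor <;> linarith
  -- evenness and realness of g
  have hχ_even : ∀ u : ℝ, χ (-u) = χ u := by
    intro u
    have : -u ∈ Icc (-(1/2):ℝ) (1/2) ↔ u ∈ Icc (-(1/2):ℝ) (1/2) := by
      simp only [mem_Icc]; constructor <;> intro h <;> constructor <;> linarith [h.1, h.2]
    by_cases hu : u ∈ Icc (-(1/2):ℝ) (1/2)
    · rw [hχ, indicator_of_mem (this.2 hu), indicator_of_mem hu]
    · rw [hχ, indicator_of_notMem (fun h => hu (this.1 h)), indicator_of_notMem hu]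
  have hg_even : ∀ x : ℝ, g (-x) = g x := by
    intro x
    rw [hg, convolution_def, convolution_def]
    rw [← MeasureTheory.integral_neg_eq_self]
    congr 1 with t
    have h1 : φc (-t) = φc t := by simp only [hφc]; rw [φ.normed_neg]
    have h2 : -x - -t = -(x - t) := by ring
    rw [h1, h2, hχ_even]
  have hχ_conj : ∀ u : ℝ, (starRingEnd ℂ) (χ u) = χ u := by
    intro u
    by_cases hu : u ∈ Icc (-(1/2):ℝ) (1/2)
    · rw [hχ, indicator_of_mem hu]; simp
    · rw [hχ, indicator_of_notMem hu]; simp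
  have hg_conj : ∀ x : ℝ, (starRingEnd ℂ) (g x) = g x := by
    intro x
    rw [hg, convolution_def, ← integral_conj]
    congr 1 with t
    simp only [ContinuousLinearMap.mul_apply', map_mul, hχ_conj, Complex.conj_ofReal, hφc]
  -- Fourier transform of the convolution is the product of Fourier transforms
  have hchar : ∀ a b : ℝ, (𝐞 a : ℂ) * (𝐞 b : ℂ) = (𝐞 (a + b) : ℂ) := by
    intro a b
    rw [Real.fourierChar_apply, Real.fourierChar_apply, Real.fourierChar_apply,
      ← Complex.exp_add]
    congr 1
    push_cast
    ring
  have hmul : ∀ w : ℝ, 𝓕 g w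
      = 𝓕 φc w * 𝓕 χ w := by
    intro w
    have h1 : Integrable (fun t : ℝ => (𝐞 (-(t * w)) : ℂ) * φc t) := by
      refine (hφc_int.bdd_mul (c := 1) ?_ (Filter.Eventually.of_forall fun t => ?_))
      · exact ((Real.continuous_fourierChar.comp ((continuous_id.mul continuous_const).neg)).subtype_val).aestronglyMeasurable
      · exact (Circle.norm_coe _).le
    have h2 : Integrable (fun u : ℝ => (𝐞 (-(u * w)) : ℂ) * χ u) := by
      refine (hχ_int.bdd_mul (c := 1) ?_ (Filter.Eventually.of_forall fun t => ?_))
      · exact ((Real.continuous_fourierChar.comp ((continuous_id.mul continuous_const).neg)).subtype_val).aestronglyMeasurable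
      · exact (Circle.norm_coe _).le
    have key : ∀ x : ℝ, ((fun t : ℝ => (𝐞 (-(t * w)) : ℂ) * φc t)
        ⋆[ContinuousLinearMap.mul ℝ ℂ] (fun u : ℝ => (𝐞 (-(u * w)) : ℂ) * χ u)) x
        = (𝐞 (-(x * w)) : ℂ) * g x := by
      intro x
      rw [convolution_def, hg, convolution_def, ← MeasureTheory.integral_const_mul]
      congr 1 with t
      simp only [ContinuousLinearMap.mul_apply']
      have : (𝐞 (-(t * w)) : ℂ) * (𝐞 (-((x - t) * w)) : ℂ) = (𝐞 (-(x * w)) : ℂ) := by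
        rw [hchar, show -(t * w) + -((x - t) * w) = -(x * w) by ring]
      calc (𝐞 (-(t * w)) : ℂ) * φc t * ((𝐞 (-((x - t) * w)) : ℂ) * χ (x - t))
          = ((𝐞 (-(t * w)) : ℂ) * (𝐞 (-((x - t) * w)) : ℂ)) * (φc t * χ (x - t)) := by ring
        _ = (𝐞 (-(x * w)) : ℂ) * (φc t * χ (x - t)) := by rw [this]
    have := integral_convolution (ContinuousLinearMap.mul ℝ ℂ) h1 h2
    rw [Real.fourier_real_eq]
    calc ∫ v : ℝ, 𝐞 (-(v * w)) • g v
        = ∫ x : ℝ, ((fun t : ℝ => (𝐞 (-(t * w)) : ℂ) * φc t)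
            ⋆[ContinuousLinearMap.mul ℝ ℂ] (fun u : ℝ => (𝐞 (-(u * w)) : ℂ) * χ u)) x := by
          congr 1 with v
          rw [key v, Circle.smul_def, smul_eq_mul]
      _ = (∫ t : ℝ, (𝐞 (-(t * w)) : ℂ) * φc t) * (∫ u : ℝ, (𝐞 (-(u * w)) : ℂ) * χ u) := by
          rw [this]; rfl
      _ = 𝓕 φc w * 𝓕 χ w := by
          rw [Real.fourier_real_eq, Real.fourier_real_eq]
          simp_rw [Circle.smul_def, smul_eq_mul]
  -- Fourier transform values
  have hφ0 : 𝓕 φc 0 = 1 := by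
    rw [Real.fourier_real_eq]
    simp only [mul_zero, neg_zero, AddChar.map_zero_eq_one, one_smul]
    rw [hφc]
    show ∫ v : ℝ, ((φ.normed volume v : ℝ) : ℂ) = 1
    rw [show (∫ v : ℝ, ((φ.normed volume v : ℝ) : ℂ)) = ((∫ v : ℝ, φ.normed volume v : ℝ) : ℂ) from integral_ofReal, φ.integral_normed]
    norm_num
  have hχ0 : 𝓕 χ 0 = 1 := by
    rw [Real.fourier_real_eq]
    simp only [mul_zero, neg_zero, AddChar.map_zero_eq_one, one_smul]
    rw [hχ, integral_indicator_const _ measurableSet_Icc]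
    rw [Real.volume_real_Icc]
    norm_num
  have hχn : ∀ m : ℤ, m ≠ 0 → 𝓕 χ m = 0 := by
    intro m hm
    have hc : ((-(2 * Real.pi * m) : ℝ) : ℂ) * Complex.I ≠ 0 := by
      apply mul_ne_zero _ Complex.I_ne_zero
      rw [Ne, Complex.ofReal_eq_zero, neg_eq_zero]
      exact mul_ne_zero (by positivity) (Int.cast_ne_zero.2 hm)
    rw [Real.fourier_real_eq]
    have hpt : ∀ x : ℝ, 𝐞 (-(x * (m:ℝ))) • χ x
        = indicator (Icc (-(1/2):ℝ) (1/2)) (fun x => Complex.exp (((-(2 * Real.pi * m) : ℝ) : ℂ) * Complex.I * x)) x := by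
      intro x
      by_cases hx : x ∈ Icc (-(1/2):ℝ) (1/2)
      · rw [hχ, indicator_of_mem hx, indicator_of_mem hx, Circle.smul_def, Real.fourierChar_apply,
          smul_eq_mul, mul_one]
        congr 1
        push_cast
        ring
      · rw [hχ, indicator_of_notMem hx, indicator_of_notMem hx, smul_zero]
    rw [integral_congr_ae (Filter.Eventually.of_forall hpt)]
    rw [integral_indicator measurableSet_Icc]
    rw [integral_Icc_eq_integral_Ioc, ← intervalIntegral.integral_of_le (by norm_num : (-(1/2):ℝ) ≤ 1/2)]
    rw [integral_exp_mul_complex hc]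
    have hexp : Complex.exp (((-(2 * Real.pi * m) : ℝ) : ℂ) * Complex.I * (1/2 : ℝ))
        = Complex.exp (((-(2 * Real.pi * m) : ℝ) : ℂ) * Complex.I * ((-(1/2) : ℝ) : ℂ)) := by
      rw [show (((-(2 * Real.pi * m) : ℝ) : ℂ) * Complex.I * (1/2 : ℝ))
          = (((-(2 * Real.pi * m) : ℝ) : ℂ) * Complex.I * ((-(1/2) : ℝ) : ℂ)) + ((-m : ℤ) : ℂ) * (2 * Real.pi * Complex.I) by push_cast; ring]
      rw [Complex.exp_add, Complex.exp_int_mul_two_pi_mul_I, mul_one]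
    rw [hexp]
    simp
  -- Schwartz package
  set gS : SchwartzMap ℝ ℂ := toSchwartzC g hg_smooth hg_supp with hgS
  set F : SchwartzMap ℝ ℂ := (FourierTransform.fourierCLE ℂ (SchwartzMap ℝ ℂ)).symm gS with hF
  have hFcoe : ⇑F = 𝓕⁻ g := by
    rw [hF, FourierTransform.fourierCLE_symm_apply, SchwartzMap.fourierInv_coe]; rfl
  have hFT : 𝓕 ⇑F = g := by
    have h1 : (FourierTransform.fourierCLE ℂ (SchwartzMap ℝ ℂ)) F = gS :=
      (FourierTransform.fourierCLE ℂ (SchwartzMap ℝ ℂ)).apply_symm_apply gS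
    have h2 : ⇑((FourierTransform.fourierCLE ℂ (SchwartzMap ℝ ℂ)) F) = 𝓕 ⇑F :=
      SchwartzMap.fourier_coe F
    rw [← h2, h1]; rfl
  have hFreal : ∀ t : ℝ, (starRingEnd ℂ) (F t) = F t := by
    intro t
    have h1 : F t = 𝓕⁻ g t := by rw [hFcoe]
    have step1 : (starRingEnd ℂ) (F t) = 𝓕 g t := by
      rw [h1, Real.fourierInv_eq, ← integral_conj, Real.fourier_real_eq]
      congr 1 with v
      simp only [Circle.smul_def, smul_eq_mul, map_mul, hg_conj]
      congr 1
      rw [Real.fourierChar_apply, Real.fourierChar_apply, ← Complex.exp_conj]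
      congr 1
      rw [map_mul, Complex.conj_ofReal, Complex.conj_I]
      have hvt : (inner ℝ v t : ℝ) = v * t := by simp [mul_comm]
      rw [hvt]
      push_cast
      ring
    rw [step1, h1, Real.fourierInv_eq_fourier_comp_neg]
    congr 1
    rw [show (fun x => g (-x)) = g from funext hg_even]
  -- the real Schwartz function
  set B : ℂ →L[ℝ] ℝ →L[ℝ] ℝ := (ContinuousLinearMap.mul ℝ ℝ).comp Complex.reCLM with hB
  set f : SchwartzMap ℝ ℝ :=
    SchwartzMap.bilinLeftCLM B (Function.HasTemperateGrowth.const (1:ℝ)) F with hf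
  have hfval : ∀ x : ℝ, f x = (F x).re := by
    intro x
    show B (F x) 1 = (F x).re
    simp [hB]
  have hcoe : ∀ x : ℝ, ((f x : ℝ) : ℂ) = F x := by
    intro x
    rw [hfval]
    exact Complex.conj_eq_iff_re.1 (hFreal x)
  have hFvals : ∀ w : ℝ, F w = 𝓕 φc (-w) * 𝓕 χ (-w) := by
    intro w
    have : F w = 𝓕⁻ g w := by rw [hFcoe]
    rw [this, Real.fourierInv_eq_fourier_neg, hmul]
  refine ⟨f, ?_, ?_, ?_⟩
  · -- band-limited
    intro h hdisj
    have flip := VectorFourier.integral_bilin_fourierIntegral_eq_flip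
      (L := innerₗ ℝ) (μ := (volume : Measure ℝ)) (ν := (volume : Measure ℝ))
      (ContinuousLinearMap.mul ℂ ℂ) Real.continuous_fourierChar continuous_inner
      F.integrable h.integrable
    rw [flip_innerₗ] at flip
    simp only [ContinuousLinearMap.mul_apply'] at flip
    have hgoal : (∫ t : ℝ, (fun t : ℝ => ((f t : ℝ) : ℂ)) t * 𝓕 (⇑h) t)
        = ∫ t : ℝ, F t * 𝓕 (⇑h) t := by
      congr 1 with t
      show ((f t : ℝ) : ℂ) * 𝓕 (⇑h) t = F t * 𝓕 (⇑h) t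
      rw [hcoe]
    rw [hgoal]
    have hR : (∫ t : ℝ, F t * 𝓕 (⇑h) t)
        = ∫ ξ : ℝ, VectorFourier.fourierIntegral 𝐞 volume (innerₗ ℝ) (⇑F) ξ * h ξ :=
      flip.symm
    rw [hR]
    have hzero : ∀ ξ : ℝ, VectorFourier.fourierIntegral 𝐞 volume (innerₗ ℝ) (⇑F) ξ * h ξ = 0 := by
      intro ξ
      have hFTξ : VectorFourier.fourierIntegral 𝐞 volume (innerₗ ℝ) (⇑F) ξ = g ξ := by
        have : VectorFourier.fourierIntegral 𝐞 volume (innerₗ ℝ) (⇑F) = 𝓕 ⇑F := rfl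
        rw [this, hFT]
      rw [hFTξ]
      by_cases hξ : g ξ = 0
      · rw [hξ, zero_mul]
      · have hξI : ξ ∈ Icc (-((1+ε)/2)) ((1+ε)/2) :=
          hg_tsupp (subset_closure (Function.mem_support.2 hξ))
        have hξh : ξ ∉ tsupport ⇑h := fun hc => (disjoint_left.1 hdisj hc) hξI
        rw [image_eq_zero_of_notMem_tsupport hξh, mul_zero]
    rw [integral_congr_ae (Filter.Eventually.of_forall hzero), integral_zero]
  · -- value at 0
    rw [hfval, hFvals 0]
    norm_num [hφ0, hχ0]
  · -- values at nonzero integers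
    intro n hn
    rw [hfval, hFvals]
    have : (-(n:ℝ)) = (((-n : ℤ) : ℤ) : ℝ) := by push_cast; ring
    rw [this, hχn (-n) (neg_ne_zero.2 hn), mul_zero]
    simp

end
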